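/- Fix 0 < τ ≤ 1 and let g_t be as above with ‖g‖²_{1/2} := (1/(2π²)) ∫|u||ĝ(u)|²du. Then for every 0 < δ < 1 there is a constant C(δ) such that for all t, s ∈ [0,1], ‖g_t − g_s‖²_{1/2} ≤ C(δ) |t−s|^{1+δ}. -/

import Mathlib

open MeasureTheory

/-- Fourier transform with the convention `ĝ(u) = ∫ g(x) e^{−iux} dx`. -/
noncomputable def fourierT (h : ℝ → ℝ) (t : ℝ) : ℂ :=
  ∫ x : ℝ, (h x : ℂ) * Complex.exp (-(Complex.I * t * x))

/-- `g_t(x) = ∫₀^t 1_{[0,s]}(x) ds − (t/τ) ∫₀^τ 1_{[0,s]}(x) ds`. -/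
noncomputable def gfun (τ t x : ℝ) : ℝ :=
  (∫ s in (0:ℝ)..t, Set.indicator (Set.Icc 0 s) (fun _ => (1:ℝ)) x) -
    t / τ * ∫ s in (0:ℝ)..τ, Set.indicator (Set.Icc 0 s) (fun _ => (1:ℝ)) x



lemma expI_hasDerivAt (θ : ℝ) : HasDerivAt (fun θ : ℝ => Complex.exp (θ * Complex.I))
    (Complex.exp (θ * Complex.I) * Complex.I) θ := by
  have h := ((Complex.ofRealCLM.hasDerivAt (x := θ)).mul_const Complex.I).cexp
  simpa using h

lemma norm_expI_sub_one (θ : ℝ) : ‖Complex.exp (θ * Complex.I) - 1‖ ≤ |θ| := by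
  have := (convex_uIcc (0:ℝ) θ).norm_image_sub_le_of_norm_hasDerivWithin_le
    (f := fun θ : ℝ => Complex.exp (θ * Complex.I))
    (f' := fun θ : ℝ => Complex.exp (θ * Complex.I) * Complex.I) (C := 1)
    (fun x _ => (expI_hasDerivAt x).hasDerivWithinAt)
    (fun x _ => by simp [Complex.norm_exp])
    (Set.left_mem_uIcc) (Set.right_mem_uIcc)
  simpa [Real.norm_eq_abs] using this

lemma norm_expI_sub_one_sub (θ : ℝ) :
    ‖Complex.exp (θ * Complex.I) - 1 - θ * Complex.I‖ ≤ θ ^ 2 := by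
  have key := (convex_uIcc (0:ℝ) θ).norm_image_sub_le_of_norm_hasDerivWithin_le
    (f := fun θ : ℝ => Complex.exp (θ * Complex.I) - 1 - θ * Complex.I)
    (f' := fun θ : ℝ => Complex.exp (θ * Complex.I) * Complex.I - Complex.I) (C := |θ|)
    (fun x _ => by
      have h1 := (expI_hasDerivAt x).sub_const 1
      have h2 : HasDerivAt (fun θ : ℝ => (θ : ℂ) * Complex.I) Complex.I x := by
        simpa using (Complex.ofRealCLM.hasDerivAt (x := x)).mul_const Complex.I
      exact (h1.sub h2).hasDerivWithinAt)
    (fun x hx => by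
      have : Complex.exp (x * Complex.I) * Complex.I - Complex.I
          = (Complex.exp (x * Complex.I) - 1) * Complex.I := by ring
      show ‖Complex.exp (x * Complex.I) * Complex.I - Complex.I‖ ≤ |θ|
      rw [this]
      have h1 : ‖(Complex.exp (x * Complex.I) - 1) * Complex.I‖
          = ‖Complex.exp (x * Complex.I) - 1‖ := by simp
      rw [h1]
      refine (norm_expI_sub_one x).trans ?_
      rcases Set.mem_uIcc.1 hx with h | h
      · rw [_root_.abs_of_nonneg h.1]; exact h.2.trans (le_abs_self θ)
      · rw [_root_.abs_of_nonpos h.2]; exact (neg_le_neg h.1).trans (neg_le_abs θ))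
    (Set.left_mem_uIcc) (Set.right_mem_uIcc)
  have : |θ| * ‖θ - (0:ℝ)‖ = θ ^ 2 := by
    rw [sub_zero, Real.norm_eq_abs, ← abs_mul, ← sq, _root_.abs_of_nonneg (sq_nonneg θ)]
  rw [← this]; simpa using key


noncomputable def pfun (a x : ℝ) : ℝ := (Set.Icc 0 a).indicator (fun y => a - y) x

lemma ind_integral (t x : ℝ) (ht : 0 ≤ t) :
    (∫ s in (0:ℝ)..t, Set.indicator (Set.Icc 0 s) (fun _ => (1:ℝ)) x) = pfun t x := by
  by_cases hx : x ∈ Set.Icc 0 t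
  · obtain ⟨hx0, hxt⟩ := hx
    have congr1 : Set.EqOn (fun s => Set.indicator (Set.Icc 0 s) (fun _ => (1:ℝ)) x)
        (fun s => Set.indicator (Set.Ici x) (fun _ => (1:ℝ)) s) (Set.uIcc 0 t) := by
      intro s _
      by_cases h : x ≤ s
      · simp [Set.indicator_of_mem, Set.mem_Icc, Set.mem_Ici, h, hx0]
      · simp [Set.indicator_of_notMem, Set.mem_Icc, Set.mem_Ici, h, hx0]
    rw [intervalIntegral.integral_congr congr1, intervalIntegral.integral_of_le ht,
      MeasureTheory.integral_indicator measurableSet_Ici]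
    have hset : volume (Set.Ioc 0 t ∩ Set.Ici x) = ENNReal.ofReal (t - x) := by
      apply le_antisymm
      · calc volume (Set.Ioc 0 t ∩ Set.Ici x) ≤ volume (Set.Icc x t) := by
              apply measure_mono; rintro y ⟨⟨_, h2⟩, h3⟩; exact ⟨h3, h2⟩
          _ = ENNReal.ofReal (t - x) := Real.volume_Icc
      · calc ENNReal.ofReal (t - x) = volume (Set.Ioc x t) := Real.volume_Ioc.symm
          _ ≤ volume (Set.Ioc 0 t ∩ Set.Ici x) := by
              apply measure_mono; rintro y ⟨h1, h2⟩
              exact ⟨⟨lt_of_le_of_lt hx0 h1, h2⟩, le_of_lt h1⟩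
    rw [MeasureTheory.setIntegral_const, Measure.real, Measure.restrict_apply measurableSet_Ici,
      Set.inter_comm, hset, smul_eq_mul, mul_one,
      ENNReal.toReal_ofReal (by linarith)]
    rw [pfun, Set.indicator_of_mem (Set.mem_Icc.2 ⟨hx0, hxt⟩)]
  · -- x outside [0, t]
    have congr1 : Set.EqOn (fun s => Set.indicator (Set.Icc 0 s) (fun _ => (1:ℝ)) x)
        (fun _ => (0:ℝ)) (Set.uIcc 0 t) := by
      intro s hs
      rw [Set.uIcc_of_le ht] at hs
      have : x ∉ Set.Icc 0 s := by
        intro ⟨h1, h2⟩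
        exact hx ⟨h1, h2.trans hs.2⟩
      simp [Set.indicator_of_notMem this]
    rw [intervalIntegral.integral_congr congr1]
    simp [pfun, Set.indicator_of_notMem hx]



noncomputable def phi (u a : ℝ) : ℂ :=
  (1 - Complex.exp (-(Complex.I * u * a)) - Complex.I * u * a) / (u : ℂ) ^ 2

lemma pfun_mul_eq_indicator (a u : ℝ) (x : ℝ) :
    ((pfun a x : ℝ) : ℂ) * Complex.exp (-(Complex.I * u * x)) =
      (Set.Icc 0 a).indicator (fun x : ℝ => ((a : ℂ) - x) * Complex.exp (-(Complex.I * u * x))) x := by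
  by_cases h : x ∈ Set.Icc 0 a
  · simp [pfun, Set.indicator_of_mem h]
  · simp [pfun, Set.indicator_of_notMem h]

lemma pfun_integrable (a u : ℝ) :
    Integrable (fun x : ℝ => ((pfun a x : ℝ) : ℂ) * Complex.exp (-(Complex.I * u * x))) := by
  have : (fun x : ℝ => ((pfun a x : ℝ) : ℂ) * Complex.exp (-(Complex.I * u * x))) =
      (Set.Icc 0 a).indicator (fun x : ℝ => ((a : ℂ) - x) * Complex.exp (-(Complex.I * u * x))) := by
    ext x; exact pfun_mul_eq_indicator a u x
  rw [this, integrable_indicator_iff measurableSet_Icc]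
  exact (Continuous.integrableOn_Icc (by fun_prop))

lemma pfun_fourier (a u : ℝ) (ha : 0 ≤ a) (hu : u ≠ 0) :
    (∫ x : ℝ, ((pfun a x : ℝ) : ℂ) * Complex.exp (-(Complex.I * u * x))) = phi u a := by
  have h1 : (∫ x : ℝ, ((pfun a x : ℝ) : ℂ) * Complex.exp (-(Complex.I * u * x))) =
      ∫ x in Set.Icc 0 a, ((a : ℂ) - x) * Complex.exp (-(Complex.I * u * x)) := by
    simp_rw [pfun_mul_eq_indicator a u]
    exact integral_indicator measurableSet_Icc
  rw [h1, MeasureTheory.integral_Icc_eq_integral_Ioc,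
    ← intervalIntegral.integral_of_le ha]
  -- now FTC
  have huc : (u : ℂ) ≠ 0 := Complex.ofReal_ne_zero.2 hu
  set E : ℝ → ℂ := fun x =>
    Complex.exp (-(Complex.I * u * x)) * (((a : ℂ) - x) * (Complex.I / u) - 1 / (u : ℂ) ^ 2) with hE
  have hderiv : ∀ x : ℝ, HasDerivAt E (((a : ℂ) - x) * Complex.exp (-(Complex.I * u * x))) x := by
    intro x
    have h1 : HasDerivAt (fun x : ℝ => -(Complex.I * u * (x : ℂ))) (-(Complex.I * u)) x := by
      simpa [neg_mul] using (Complex.ofRealCLM.hasDerivAt (x := x)).const_mul (-(Complex.I * u))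
    have h2 : HasDerivAt (fun x : ℝ => Complex.exp (-(Complex.I * u * (x : ℂ))))
        (Complex.exp (-(Complex.I * u * x)) * (-(Complex.I * u))) x := h1.cexp
    have h3 : HasDerivAt (fun x : ℝ => ((a : ℂ) - (x : ℂ)) * (Complex.I / u) - 1 / (u : ℂ) ^ 2)
        (-(Complex.I / u)) x := by
      have := (((Complex.ofRealCLM.hasDerivAt (x := x)).const_sub (a : ℂ)).mul_const
        (Complex.I / u)).sub_const (1 / (u : ℂ) ^ 2)
      simpa using this
    have := h2.mul h3
    convert this using 1
    · rfl
    · rfl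
    field_simp
    ring_nf
    rw [Complex.I_sq]
    ring
  have hcont : Continuous fun x : ℝ => ((a : ℂ) - (x : ℂ)) * Complex.exp (-(Complex.I * u * x)) := by
    fun_prop
  rw [intervalIntegral.integral_eq_sub_of_hasDerivAt (fun x _ => hderiv x)
    (hcont.intervalIntegrable 0 a)]
  rw [hE, phi]
  simp only [Complex.ofReal_zero, mul_zero, neg_zero, Complex.exp_zero, sub_zero, sub_self,
    zero_mul, one_mul]
  field_simp
  ring



noncomputable def nfun (τ t s u : ℝ) : ℂ :=
  Complex.exp (-(Complex.I * u * s)) - Complex.exp (-(Complex.I * u * t)) +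
    (((t - s) / τ : ℝ) : ℂ) * (Complex.exp (-(Complex.I * u * τ)) - 1)

lemma gfun_eq (τ t x : ℝ) (ht : 0 ≤ t) (hτ : 0 ≤ τ) :
    gfun τ t x = pfun t x - t / τ * pfun τ x := by
  unfold gfun
  rw [ind_integral t x ht, ind_integral τ x hτ]

lemma fourierT_gfun (τ t u : ℝ) (hτ : 0 < τ) (ht : 0 ≤ t) (hu : u ≠ 0) :
    fourierT (gfun τ t) u = phi u t - ((t / τ : ℝ) : ℂ) * phi u τ := by
  unfold fourierT
  have hgx : ∀ x : ℝ, ((gfun τ t x : ℝ) : ℂ) * Complex.exp (-(Complex.I * u * x)) =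
      ((pfun t x : ℝ) : ℂ) * Complex.exp (-(Complex.I * u * x)) -
      ((t / τ : ℝ) : ℂ) * (((pfun τ x : ℝ) : ℂ) * Complex.exp (-(Complex.I * u * x))) := by
    intro x; rw [gfun_eq τ t x ht hτ.le]; push_cast; ring
  simp_rw [hgx]
  rw [integral_sub (pfun_integrable t u) ((pfun_integrable τ u).const_mul _),
    integral_const_mul, pfun_fourier t u ht hu, pfun_fourier τ u hτ.le hu]

lemma D_eq (τ t s u : ℝ) (hτ : 0 < τ) (ht : 0 ≤ t) (hs : 0 ≤ s) (hu : u ≠ 0) :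
    fourierT (gfun τ t) u - fourierT (gfun τ s) u = nfun τ t s u / (u : ℂ) ^ 2 := by
  rw [fourierT_gfun τ t u hτ ht hu, fourierT_gfun τ s u hτ hs hu]
  unfold phi nfun
  have hτc : (τ : ℂ) ≠ 0 := Complex.ofReal_ne_zero.2 hτ.ne'
  have huc : (u : ℂ) ≠ 0 := Complex.ofReal_ne_zero.2 hu
  push_cast
  field_simp
  ring

lemma norm_exp_negI (u a : ℝ) : ‖Complex.exp (-(Complex.I * u * a))‖ = 1 := by
  rw [Complex.norm_exp]
  simp

lemma hexp_sub_one (u a : ℝ) : ‖Complex.exp (-(Complex.I * u * a)) - 1‖ ≤ |u| * |a| := by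
  have h : -(Complex.I * (u:ℂ) * (a:ℂ)) = ((-(u * a) : ℝ) : ℂ) * Complex.I := by
    push_cast; ring
  rw [h]
  simpa [abs_mul] using norm_expI_sub_one (-(u * a))

lemma hexp_sub_one_sub (u a : ℝ) :
    ‖Complex.exp (-(Complex.I * u * a)) - 1 + Complex.I * u * a‖ ≤ (u * a) ^ 2 := by
  have heq : Complex.exp (-(Complex.I * u * a)) - 1 + Complex.I * u * a =
      Complex.exp (((-(u * a) : ℝ) : ℂ) * Complex.I) - 1 - ((-(u * a) : ℝ) : ℂ) * Complex.I := by
    push_cast; ring_nf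
  rw [heq]
  simpa [neg_sq] using norm_expI_sub_one_sub (-(u * a))

lemma exp_split (u t s : ℝ) : Complex.exp (-(Complex.I * u * t)) =
    Complex.exp (-(Complex.I * u * s)) * Complex.exp (-(Complex.I * u * (t - s))) := by
  rw [← Complex.exp_add]
  push_cast
  ring_nf

lemma nfun_bound1 (τ t s u : ℝ) (hτ0 : 0 < τ) (hτ1 : τ ≤ 1)
    (ht : t ∈ Set.Icc (0:ℝ) 1) (hs : s ∈ Set.Icc (0:ℝ) 1) :
    ‖nfun τ t s u‖ ≤ 3 * u ^ 2 * |t - s| := by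
  have hτc : (τ : ℂ) ≠ 0 := Complex.ofReal_ne_zero.2 hτ0.ne'
  set es := Complex.exp (-(Complex.I * u * s)) with hes
  set w := Complex.exp (-(Complex.I * u * (t - s))) - 1 + Complex.I * u * (t - s) with hw
  set v := Complex.exp (-(Complex.I * u * τ)) - 1 + Complex.I * u * τ with hv
  have hid : nfun τ t s u =
      Complex.I * u * ((t:ℂ) - s) * (es - 1) - es * w + (((t - s) : ℂ) / τ) * v := by
    unfold nfun
    rw [exp_split u t s, hw, hv, hes]
    push_cast
    field_simp
    ring
  have h1 : ‖Complex.I * u * ((t:ℂ) - s) * (es - 1)‖ ≤ |u| * |t - s| * (|u| * |s|) := by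
    rw [norm_mul, norm_mul, norm_mul]
    have e1 : ‖Complex.I‖ = 1 := by simp
    have e2 : ‖(u:ℂ)‖ = |u| := by simp [Complex.norm_real]
    have e3 : ‖(t:ℂ) - s‖ = |t - s| := by
      rw [← Complex.ofReal_sub, Complex.norm_real, Real.norm_eq_abs]
    rw [e1, e2, e3, one_mul]
    have := hexp_sub_one u s
    rw [← hes] at this
    exact mul_le_mul_of_nonneg_left this (by positivity)
  have h2 : ‖es * w‖ ≤ (u * (t - s)) ^ 2 := by
    rw [norm_mul, hes, norm_exp_negI, one_mul]
    have := hexp_sub_one_sub u (t - s)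
    push_cast at this
    exact this
  have h3 : ‖(((t - s) : ℂ) / τ) * v‖ ≤ (|t - s| / τ) * (u * τ) ^ 2 := by
    rw [norm_mul, norm_div]
    have e3 : ‖(t:ℂ) - s‖ = |t - s| := by
      rw [← Complex.ofReal_sub, Complex.norm_real, Real.norm_eq_abs]
    have e4 : ‖(τ:ℂ)‖ = τ := by
      simp [Complex.norm_real, abs_of_pos hτ0]
    rw [e3, e4]
    exact mul_le_mul_of_nonneg_left (hexp_sub_one_sub u τ) (by positivity)
  calc ‖nfun τ t s u‖ ≤ ‖Complex.I * u * ((t:ℂ) - s) * (es - 1) - es * w‖ +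
        ‖(((t - s) : ℂ) / τ) * v‖ := by rw [hid]; exact norm_add_le _ _
    _ ≤ ‖Complex.I * u * ((t:ℂ) - s) * (es - 1)‖ + ‖es * w‖ +
        ‖(((t - s) : ℂ) / τ) * v‖ := by gcongr; exact norm_sub_le _ _
    _ ≤ |u| * |t - s| * (|u| * |s|) + (u * (t - s)) ^ 2 + (|t - s| / τ) * (u * τ) ^ 2 := by
        gcongr
    _ ≤ 3 * u ^ 2 * |t - s| := by
        obtain ⟨hs0, hs1⟩ := hs
        obtain ⟨ht0, ht1⟩ := ht
        have hd1 : |t - s| ≤ 1 := by rw [abs_le]; constructor <;> linarith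
        have habs : |s| = s := abs_of_nonneg hs0
        have e1 : |u| * |t - s| * (|u| * |s|) = u ^ 2 * |t - s| * |s| := by
          rw [← sq_abs u]; ring
        have e2 : (u * (t - s)) ^ 2 = u ^ 2 * |t - s| ^ 2 := by
          rw [mul_pow, sq_abs]
        have e3 : (|t - s| / τ) * (u * τ) ^ 2 = u ^ 2 * |t - s| * τ := by
          field_simp
        rw [e1, e2, e3]
        nlinarith [sq_nonneg u, abs_nonneg (t - s), mul_nonneg (sq_nonneg u) (abs_nonneg (t-s))]

lemma norm_ofReal_sub (t s : ℝ) : ‖(t:ℂ) - s‖ = |t - s| := by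
  rw [← Complex.ofReal_sub, Complex.norm_real, Real.norm_eq_abs]

lemma nfun_bound2 (τ t s u : ℝ) (hτ0 : 0 < τ) :
    ‖nfun τ t s u‖ ≤ 2 * |u| * |t - s| := by
  unfold nfun
  have h1 : ‖Complex.exp (-(Complex.I * u * s)) - Complex.exp (-(Complex.I * u * t))‖
      ≤ |u| * |t - s| := by
    rw [exp_split u t s, show Complex.exp (-(Complex.I * u * s)) -
        Complex.exp (-(Complex.I * u * s)) * Complex.exp (-(Complex.I * u * (t - s))) =
        Complex.exp (-(Complex.I * u * s)) *
          (1 - Complex.exp (-(Complex.I * u * (t - s)))) from by ring,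
      norm_mul, norm_exp_negI, one_mul, norm_sub_rev]
    have := hexp_sub_one u (t - s)
    push_cast at this
    simpa using this
  have h2 : ‖(((t - s) / τ : ℝ) : ℂ) * (Complex.exp (-(Complex.I * u * τ)) - 1)‖
      ≤ (|t - s| / τ) * (|u| * τ) := by
    rw [norm_mul, Complex.norm_real, Real.norm_eq_abs, abs_div, abs_of_pos hτ0]
    exact mul_le_mul_of_nonneg_left ((hexp_sub_one u τ).trans (by
      rw [abs_of_pos hτ0])) (by positivity)
  calc ‖_ + _‖ ≤ _ + _ := norm_add_le _ _
    _ ≤ |u| * |t - s| + (|t - s| / τ) * (|u| * τ) := add_le_add h1 h2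
    _ = 2 * |u| * |t - s| := by field_simp; ring

lemma nfun_bound3 (τ t s u : ℝ) (hτ0 : 0 < τ) (hτ1 : τ ≤ 1)
    (ht : t ∈ Set.Icc (0:ℝ) 1) (hs : s ∈ Set.Icc (0:ℝ) 1) :
    ‖nfun τ t s u‖ ≤ 4 / τ := by
  obtain ⟨hs0, hs1⟩ := hs; obtain ⟨ht0, ht1⟩ := ht
  have hd1 : |t - s| ≤ 1 := by rw [abs_le]; constructor <;> linarith
  unfold nfun
  have h1 : ‖Complex.exp (-(Complex.I * u * s)) - Complex.exp (-(Complex.I * u * t))‖ ≤ 2 := by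
    calc _ ≤ ‖Complex.exp (-(Complex.I * u * s))‖ + ‖Complex.exp (-(Complex.I * u * t))‖ :=
          norm_sub_le _ _
      _ = 2 := by rw [norm_exp_negI, norm_exp_negI]; norm_num
  have h2 : ‖(((t - s) / τ : ℝ) : ℂ) * (Complex.exp (-(Complex.I * u * τ)) - 1)‖ ≤ 2 / τ := by
    rw [norm_mul, Complex.norm_real, Real.norm_eq_abs, abs_div, abs_of_pos hτ0]
    have hb : ‖Complex.exp (-(Complex.I * u * τ)) - 1‖ ≤ 2 := by
      calc _ ≤ ‖Complex.exp (-(Complex.I * u * τ))‖ + ‖(1:ℂ)‖ := norm_sub_le _ _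
        _ = 2 := by rw [norm_exp_negI]; norm_num
    calc |t - s| / τ * ‖Complex.exp (-(Complex.I * u * τ)) - 1‖ ≤ (1 / τ) * 2 := by
          apply mul_le_mul (by gcongr) hb (norm_nonneg _) (by positivity)
      _ = 2 / τ := by ring
  calc ‖_ + _‖ ≤ _ + _ := norm_add_le _ _
    _ ≤ 2 + 2 / τ := add_le_add h1 h2
    _ ≤ 4 / τ := by
        have h : (2:ℝ) ≤ 2 / τ := by rw [le_div_iff₀ hτ0]; linarith
        have h2 : 2 / τ + 2 / τ = 4 / τ := by ring
        linarith

lemma D_norm_le (τ t s u : ℝ) (hτ0 : 0 < τ) (hτ1 : τ ≤ 1)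
    (ht : t ∈ Set.Icc (0:ℝ) 1) (hs : s ∈ Set.Icc (0:ℝ) 1) (hu : u ≠ 0) :
    ‖fourierT (gfun τ t) u - fourierT (gfun τ s) u‖ ≤ 3 * |t - s| ∧
    ‖fourierT (gfun τ t) u - fourierT (gfun τ s) u‖ ≤ 2 * |t - s| / |u| ∧
    ‖fourierT (gfun τ t) u - fourierT (gfun τ s) u‖ ≤ 4 / (τ * u ^ 2) := by
  have hD := D_eq τ t s u hτ0 ht.1 hs.1 hu
  have hnorm : ‖fourierT (gfun τ t) u - fourierT (gfun τ s) u‖ = ‖nfun τ t s u‖ / u ^ 2 := by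
    rw [hD, norm_div, norm_pow]
    norm_num [Complex.norm_real, sq_abs]
  have hu2 : (0:ℝ) < u ^ 2 := by positivity
  refine ⟨?_, ?_, ?_⟩
  · rw [hnorm, div_le_iff₀ hu2]
    calc ‖nfun τ t s u‖ ≤ 3 * u ^ 2 * |t - s| := nfun_bound1 τ t s u hτ0 hτ1 ht hs
      _ = 3 * |t - s| * u ^ 2 := by ring
  · rw [hnorm]
    rw [div_le_div_iff₀ hu2 (abs_pos.2 hu)]
    calc ‖nfun τ t s u‖ * |u| ≤ (2 * |u| * |t - s|) * |u| := by
          exact mul_le_mul_of_nonneg_right (nfun_bound2 τ t s u hτ0) (abs_nonneg u)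
      _ = 2 * |t - s| * u ^ 2 := by rw [← sq_abs u]; ring
  · rw [hnorm, div_le_div_iff₀ hu2 (by positivity)]
    calc ‖nfun τ t s u‖ * (τ * u ^ 2) ≤ (4 / τ) * (τ * u ^ 2) := by
          exact mul_le_mul_of_nonneg_right (nfun_bound3 τ t s u hτ0 hτ1 ht hs) (by positivity)
      _ = 4 * u ^ 2 := by field_simp

lemma interp_bound (d a K τ δ : ℝ) (hδ0 : 0 < δ) (hδ1 : δ < 1) (hτ0 : 0 < τ)
    (hd : 0 ≤ d) (ha : 1 < a) (r : ℝ) (hr : 0 ≤ r)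
    (h2 : r ≤ 2 * d / a) (h3 : r ≤ 4 / (τ * a ^ 2))
    (hK : K = (2 * d) ^ (1 + δ) * (4 / τ) ^ (1 - δ)) :
    a * r ^ 2 ≤ K * a ^ (δ - 2) := by
  have ha0 : (0:ℝ) < a := by linarith
  rcases eq_or_lt_of_le hr with h | hr0
  · rw [← h]
    have : (0:ℝ) ^ 2 = 0 := by norm_num
    rw [this, mul_zero, hK]
    positivity
  have e1 : r ^ 2 = r ^ ((1 + δ) : ℝ) * r ^ ((1 - δ) : ℝ) := by
    rw [← Real.rpow_add hr0]
    norm_num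
  rw [e1]
  have hb2 : r ^ ((1 + δ) : ℝ) ≤ (2 * d / a) ^ ((1 + δ) : ℝ) :=
    Real.rpow_le_rpow hr h2 (by linarith)
  have hb3 : r ^ ((1 - δ) : ℝ) ≤ (4 / (τ * a ^ 2)) ^ ((1 - δ) : ℝ) :=
    Real.rpow_le_rpow hr h3 (by linarith)
  calc a * (r ^ ((1 + δ) : ℝ) * r ^ ((1 - δ) : ℝ))
      ≤ a * ((2 * d / a) ^ ((1 + δ) : ℝ) * (4 / (τ * a ^ 2)) ^ ((1 - δ) : ℝ)) := by
        apply mul_le_mul_of_nonneg_left _ ha0.le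
        exact mul_le_mul hb2 hb3 (Real.rpow_nonneg hr _) (Real.rpow_nonneg (by positivity) _)
    _ = K * a ^ ((δ - 2) : ℝ) := by
        have e2 : ((2 * d) / a) ^ ((1 + δ):ℝ) = (2 * d) ^ ((1 + δ):ℝ) * a ^ ((-(1 + δ)):ℝ) := by
          rw [Real.div_rpow (by positivity) ha0.le, Real.rpow_neg ha0.le, div_eq_mul_inv]
        have e3 : ((4 / τ) / a ^ 2) ^ ((1 - δ):ℝ) =
            (4 / τ) ^ ((1 - δ):ℝ) * a ^ ((-(2 * (1 - δ))):ℝ) := by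
          rw [show (a:ℝ) ^ 2 = a ^ ((2:ℝ)) from (Real.rpow_two a).symm,
            Real.div_rpow (by positivity) (Real.rpow_nonneg ha0.le _),
            ← Real.rpow_mul ha0.le, Real.rpow_neg ha0.le, div_eq_mul_inv]
        rw [show 4 / (τ * a ^ 2) = (4 / τ) / (a ^ 2) from by ring, hK, e2, e3]
        rw [show a * ((2 * d) ^ ((1 + δ):ℝ) * a ^ ((-(1 + δ)):ℝ) *
            ((4 / τ) ^ ((1 - δ):ℝ) * a ^ ((-(2 * (1 - δ))):ℝ))) =
            ((2 * d) ^ ((1 + δ):ℝ) * (4 / τ) ^ ((1 - δ):ℝ)) *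
            (a * (a ^ ((-(1 + δ)):ℝ) * a ^ ((-(2 * (1 - δ))):ℝ))) from by ring]
        congr 1
        rw [← Real.rpow_add ha0]
        nth_rw 1 [← Real.rpow_one a]
        rw [← Real.rpow_add ha0]
        congr 1
        ring

section Gbound
variable (δ : ℝ)

noncomputable def p2 : ℝ → ℝ := (Set.Ioi (1:ℝ)).indicator (fun x => x ^ (δ - 2))
noncomputable def p1 : ℝ → ℝ := (Set.Iio (-1:ℝ)).indicator (fun x => (-x) ^ (δ - 2))

lemma p1_eq_comp : p1 δ = (p2 δ) ∘ (fun x : ℝ => -x) := by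
  ext x
  by_cases h : x < -1
  · have h2 : (1:ℝ) < -x := by linarith
    simp [p1, p2, Set.indicator_of_mem, h, Set.mem_Iio, Set.mem_Ioi, h2, Function.comp]
  · have h2 : ¬ (1:ℝ) < -x := by intro hc; apply h; linarith
    simp [p1, p2, Set.indicator_of_notMem, h, Set.mem_Iio, Set.mem_Ioi, h2, Function.comp]

lemma p2_integrable (hδ2 : δ - 2 < -1) : Integrable (p2 δ) := by
  unfold p2
  rw [integrable_indicator_iff measurableSet_Ioi]
  exact integrableOn_Ioi_rpow_of_lt hδ2 one_pos

lemma p1_integrable (hδ2 : δ - 2 < -1) : Integrable (p1 δ) := by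
  rw [p1_eq_comp]
  exact ((Measure.measurePreserving_neg (volume : Measure ℝ)).integrable_comp
    (p2_integrable δ hδ2).aestronglyMeasurable).2 (p2_integrable δ hδ2)

lemma p2_integral (hδ2 : δ - 2 < -1) : ∫ x : ℝ, p2 δ x = 1 / (1 - δ) := by
  unfold p2
  rw [integral_indicator measurableSet_Ioi, integral_Ioi_rpow_of_lt hδ2 one_pos]
  rw [Real.one_rpow, div_eq_div_iff (by linarith) (by linarith : (1:ℝ) - δ ≠ 0)]
  ring

lemma p1_integral (hδ2 : δ - 2 < -1) : ∫ x : ℝ, p1 δ x = 1 / (1 - δ) := by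
  rw [p1_eq_comp, show (p2 δ) ∘ (fun x : ℝ => -x) = fun x => p2 δ (-x) from rfl,
    integral_neg_eq_self (p2 δ) volume, p2_integral δ hδ2]

end Gbound

/-- Hölder-type modulus of continuity of `t ↦ g_t` in the homogeneous `H^{1/2}` seminorm:
for every `0 < δ < 1` there is `C(δ)` such that for all `t, s ∈ [0,1]`,
`‖g_t − g_s‖²_{1/2} ≤ C(δ) |t−s|^{1+δ}`, where
`‖g‖²_{1/2} = (1/(2π²)) ∫ |u| |ĝ(u)|² du`. -/
theorem stmt_12 (τ : ℝ) (hτ0 : 0 < τ) (hτ1 : τ ≤ 1) (δ : ℝ) (hδ0 : 0 < δ) (hδ1 : δ < 1) :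
    ∃ C : ℝ, 0 < C ∧ ∀ t ∈ Set.Icc (0:ℝ) 1, ∀ s ∈ Set.Icc (0:ℝ) 1,
      1 / (2 * Real.pi ^ 2) *
          (∫ u : ℝ, |u| * ‖fourierT (gfun τ t) u - fourierT (gfun τ s) u‖ ^ 2) ≤
        C * |t - s| ^ (1 + δ) := by
  have h1δ : 0 < 1 - δ := by linarith
  refine ⟨18 + 32 / (τ * (1 - δ)), by positivity, ?_⟩
  intro t ht s hs
  by_cases hts : t = s
  · subst hts
    simp [sub_self, abs_zero, Real.zero_rpow (by positivity : (1:ℝ) + δ ≠ 0)]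
  set d := |t - s| with hd
  have hd0 : 0 < d := abs_pos.2 (sub_ne_zero.2 hts)
  have hd1 : d ≤ 1 := by
    rw [hd, abs_le]
    obtain ⟨ht0, ht1⟩ := ht; obtain ⟨hs0, hs1⟩ := hs
    constructor <;> linarith
  have hδ2 : δ - 2 < -1 := by linarith
  set K := (2 * d) ^ ((1 + δ) : ℝ) * (4 / τ) ^ ((1 - δ) : ℝ) with hK
  have hK0 : 0 ≤ K := by positivity
  set G : ℝ → ℝ := fun u => (Set.Icc (-1:ℝ) 1).indicator (fun _ => 9 * d ^ 2) u +
    K * (p1 δ u + p2 δ u) with hG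
  have hint1 : Integrable ((Set.Icc (-1:ℝ) 1).indicator (fun _ => 9 * d ^ 2)) := by
    rw [integrable_indicator_iff measurableSet_Icc]
    exact integrableOn_const measure_Icc_lt_top.ne
  have hint2 : Integrable (fun u => K * (p1 δ u + p2 δ u)) :=
    ((p1_integrable δ hδ2).add (p2_integrable δ hδ2)).const_mul K
  have hGint : Integrable G := hint1.add hint2
  -- pointwise bound
  have hpt : ∀ u : ℝ, u ≠ 0 →
      |u| * ‖fourierT (gfun τ t) u - fourierT (gfun τ s) u‖ ^ 2 ≤ G u := by
    intro u hu
    obtain ⟨B1, B2, B3⟩ := D_norm_le τ t s u hτ0 hτ1 ht hs hu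
    by_cases hu1 : |u| ≤ 1
    · have hmem : u ∈ Set.Icc (-1:ℝ) 1 := by
        rw [Set.mem_Icc]; exact abs_le.1 hu1
      have hp1 : p1 δ u = 0 := by
        apply Set.indicator_of_notMem
        rw [Set.mem_Iio, not_lt]; linarith [(abs_le.1 hu1).1]
      have hp2 : p2 δ u = 0 := by
        apply Set.indicator_of_notMem
        rw [Set.mem_Ioi, not_lt]; linarith [(abs_le.1 hu1).2]
      rw [hG]
      simp only [hp1, hp2, Set.indicator_of_mem hmem, add_zero, mul_zero]
      calc |u| * ‖fourierT (gfun τ t) u - fourierT (gfun τ s) u‖ ^ 2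
          ≤ 1 * (3 * d) ^ 2 := by
            apply mul_le_mul hu1 (pow_le_pow_left₀ (norm_nonneg _) B1 2)
              (by positivity) zero_le_one
        _ = 9 * d ^ 2 := by ring
    · push_neg at hu1
      have hnotmem : u ∉ Set.Icc (-1:ℝ) 1 := by
        rw [Set.mem_Icc, not_and_or]
        rcases lt_abs.1 hu1 with h | h
        · right; push_neg; linarith
        · left; push_neg; linarith
      have hsum : p1 δ u + p2 δ u = |u| ^ ((δ - 2) : ℝ) := by
        rcases lt_abs.1 hu1 with h | h
        · have hp1 : p1 δ u = 0 := by
            apply Set.indicator_of_notMem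
            rw [Set.mem_Iio, not_lt]; linarith
          have hp2 : p2 δ u = u ^ ((δ - 2) : ℝ) :=
            Set.indicator_of_mem (Set.mem_Ioi.2 h) _
          rw [hp1, hp2, zero_add, abs_of_pos (by linarith)]
        · have hp1 : p1 δ u = (-u) ^ ((δ - 2) : ℝ) :=
            Set.indicator_of_mem (Set.mem_Iio.2 (by linarith)) _
          have hp2 : p2 δ u = 0 := by
            apply Set.indicator_of_notMem
            rw [Set.mem_Ioi, not_lt]; linarith
          rw [hp1, hp2, add_zero, abs_of_neg (by linarith)]
      rw [hG]
      simp only [Set.indicator_of_notMem hnotmem, hsum, zero_add]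
      have hB3' : ‖fourierT (gfun τ t) u - fourierT (gfun τ s) u‖ ≤ 4 / (τ * |u| ^ 2) := by
        rw [sq_abs]; exact B3
      exact interp_bound d |u| K τ δ hδ0 hδ1 hτ0 hd0.le hu1 _ (norm_nonneg _) B2 hB3' hK
  -- a.e. bound
  have h0 : ∀ᵐ u : ℝ, u ≠ (0:ℝ) := by
    rw [MeasureTheory.ae_iff]
    simp only [not_not, Set.setOf_eq_eq_singleton]
    exact measure_singleton 0
  have hae : (fun u : ℝ => |u| * ‖fourierT (gfun τ t) u - fourierT (gfun τ s) u‖ ^ 2)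
      ≤ᵐ[volume] G := by
    filter_upwards [h0] with u hu using hpt u hu
  have hmono := integral_mono_of_nonneg
    (Filter.Eventually.of_forall fun u => by positivity) hGint hae
  -- value of ∫ G
  have hGval : ∫ u : ℝ, G u = 18 * d ^ 2 + K * (2 / (1 - δ)) := by
    rw [hG, integral_add hint1 hint2, integral_indicator_const _ measurableSet_Icc,
      MeasureTheory.integral_const_mul,
      integral_add (p1_integrable δ hδ2) (p2_integrable δ hδ2),
      p1_integral δ hδ2, p2_integral δ hδ2, Measure.real, Real.volume_Icc]
    norm_num
    ring
  -- bounds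
  have hA : d ^ 2 ≤ d ^ ((1 + δ) : ℝ) := by
    rw [← Real.rpow_two]
    exact Real.rpow_le_rpow_of_exponent_ge hd0 hd1 (by linarith)
  have hBK : K ≤ 4 * (4 / τ) * d ^ ((1 + δ) : ℝ) := by
    rw [hK, Real.mul_rpow (by norm_num) hd0.le]
    have h2r : (2:ℝ) ^ ((1 + δ) : ℝ) ≤ 4 := by
      calc (2:ℝ) ^ ((1 + δ) : ℝ) ≤ 2 ^ ((2:ℝ)) :=
            Real.rpow_le_rpow_of_exponent_le (by norm_num) (by linarith)
        _ = 4 := by rw [Real.rpow_two]; norm_num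
    have h4r : (4 / τ) ^ ((1 - δ) : ℝ) ≤ 4 / τ := by
      calc (4 / τ) ^ ((1 - δ) : ℝ) ≤ (4 / τ) ^ ((1:ℝ)) := by
            apply Real.rpow_le_rpow_of_exponent_le _ (by linarith)
            rw [le_div_iff₀ hτ0]; linarith
        _ = 4 / τ := Real.rpow_one _
    calc (2:ℝ) ^ ((1 + δ) : ℝ) * d ^ ((1 + δ) : ℝ) * (4 / τ) ^ ((1 - δ) : ℝ)
        ≤ 4 * d ^ ((1 + δ) : ℝ) * (4 / τ) := by
          apply mul_le_mul (mul_le_mul h2r le_rfl (by positivity) (by norm_num)) h4r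
            (by positivity) (by positivity)
      _ = 4 * (4 / τ) * d ^ ((1 + δ) : ℝ) := by ring
  have hfinal : ∫ u : ℝ, G u ≤ (18 + 32 / (τ * (1 - δ))) * d ^ ((1 + δ) : ℝ) := by
    rw [hGval]
    have e1 : 18 * d ^ 2 ≤ 18 * d ^ ((1 + δ) : ℝ) := by linarith
    have e2 : K * (2 / (1 - δ)) ≤ (32 / (τ * (1 - δ))) * d ^ ((1 + δ) : ℝ) := by
      calc K * (2 / (1 - δ)) ≤ (4 * (4 / τ) * d ^ ((1 + δ) : ℝ)) * (2 / (1 - δ)) := by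
            apply mul_le_mul_of_nonneg_right hBK (by positivity)
        _ = (32 / (τ * (1 - δ))) * d ^ ((1 + δ) : ℝ) := by
            field_simp; ring
    linarith
  -- conclude
  have hfnonneg : 0 ≤ ∫ u : ℝ, |u| * ‖fourierT (gfun τ t) u - fourierT (gfun τ s) u‖ ^ 2 :=
    integral_nonneg fun u => by positivity
  have hπ : 1 / (2 * Real.pi ^ 2) ≤ 1 := by
    rw [div_le_one (by positivity)]
    nlinarith [Real.pi_gt_three]
  calc 1 / (2 * Real.pi ^ 2) *
        (∫ u : ℝ, |u| * ‖fourierT (gfun τ t) u - fourierT (gfun τ s) u‖ ^ 2)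
      ≤ 1 * (∫ u : ℝ, |u| * ‖fourierT (gfun τ t) u - fourierT (gfun τ s) u‖ ^ 2) :=
        mul_le_mul_of_nonneg_right hπ hfnonneg
    _ = ∫ u : ℝ, |u| * ‖fourierT (gfun τ t) u - fourierT (gfun τ s) u‖ ^ 2 := one_mul _
    _ ≤ ∫ u : ℝ, G u := hmono
    _ ≤ (18 + 32 / (τ * (1 - δ))) * d ^ ((1 + δ) : ℝ) := hfinal
    _ = (18 + 32 / (τ * (1 - δ))) * |t - s| ^ (1 + δ) := by rw [hd]
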